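/- Let f : ℝ → ℝ and x ∈ ℝ. If f is differentiable at x, then for every ε > 0 there exists δ > 0 such that for all h₁, h₂ ∈ (0, δ) one has |h₂·f(x+h₁) + h₁·f(x−h₂) − (h₁+h₂)·f(x)| ≤ ε·h₁·h₂. -/
import Mathlib


/-- Converse direction of the differentiability criterion (2.14): if `f` is differentiable
at `x`, then the symmetric second-order difference is `o(h₁ h₂)`. -/
theorem second_order_difference_of_differentiable
    (f : ℝ → ℝ) (x : ℝ) (hf : ∃ d : ℝ, HasDerivAt f d x) :
    ∀ ε > (0:ℝ), ∃ δ > (0:ℝ), ∀ h₁ h₂ : ℝ,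
      h₁ ∈ Set.Ioo 0 δ → h₂ ∈ Set.Ioo 0 δ →
      |h₂ * f (x + h₁) + h₁ * f (x - h₂) - (h₁ + h₂) * f x| ≤ ε * h₁ * h₂ := by
  intro ε hε
  obtain ⟨d, hd⟩ := hf
  have hlo := (hasDerivAt_iff_isLittleO.mp hd).def (by positivity : (0:ℝ) < ε / 2)
  rw [Metric.eventually_nhds_iff] at hlo
  obtain ⟨δ, hδ, hball⟩ := hlo
  refine ⟨δ, hδ, fun h₁ h₂ ⟨h₁0, h₁δ⟩ ⟨h₂0, h₂δ⟩ => ?_⟩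
  have b1 : ‖f (x + h₁) - f x - (x + h₁ - x) • d‖ ≤ ε / 2 * ‖x + h₁ - x‖ := by
    apply hball
    simp [Real.dist_eq, abs_of_pos h₁0, h₁δ]
  have b2 : ‖f (x - h₂) - f x - (x - h₂ - x) • d‖ ≤ ε / 2 * ‖x - h₂ - x‖ := by
    apply hball
    simp [Real.dist_eq, abs_of_pos h₂0, h₂δ]
  simp only [add_sub_cancel_left, sub_sub_cancel_left, smul_eq_mul, Real.norm_eq_abs,
    abs_of_pos h₁0, abs_neg, abs_of_pos h₂0] at b1 b2
  have key : h₂ * f (x + h₁) + h₁ * f (x - h₂) - (h₁ + h₂) * f x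
      = h₂ * (f (x + h₁) - f x - h₁ * d) + h₁ * (f (x - h₂) - f x - (-h₂) * d) := by
    ring
  rw [key]
  calc |h₂ * (f (x + h₁) - f x - h₁ * d) + h₁ * (f (x - h₂) - f x - (-h₂) * d)|
      ≤ |h₂ * (f (x + h₁) - f x - h₁ * d)| + |h₁ * (f (x - h₂) - f x - (-h₂) * d)| :=
        abs_add_le _ _
    _ ≤ h₂ * (ε / 2 * h₁) + h₁ * (ε / 2 * h₂) := by
        rw [abs_mul, abs_mul, abs_of_pos h₂0, abs_of_pos h₁0]
        gcongr
    _ = ε * h₁ * h₂ := by ring
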